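/- arXiv:2107.06952 — 2 statements merged into one kernel-verified Lean document; each statement's English description precedes it below -/
import Mathlib

section
/- For every integer m ≥ 2, the numbers c_m^* satisfy 4·c_{2m}^* = c_{2m+2}^* + c_{m+1}^*. -/
/-- The Conway number (correlation) `C(A,B)` of two head/tail strings of length `n`,
encoded as functions `Fin n → Bool` (with `H = true`, `T = false`, and 0-indexed
positions): `C(A,B) = ∑_{i=1}^n δ_i 2^{n-i}` where `δ_i = 1` iff `a_{i+j} = b_{1+j}`
for all `j = 0,…,n-i`. -/
def conway {n : ℕ} (A B : Fin n → Bool) : ℕ :=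
  ∑ i : Fin n,
    if (∀ j : Fin n, (i : ℕ) + (j : ℕ) < n → A (i + j) = B j) then 2 ^ (n - 1 - (i : ℕ)) else 0

/-- `cstar m` is the number of head/tail strings of length `m` beginning with `HT`,
ending with `TH`, whose autocorrelation is `2^{m-1} + 1`. -/
def cstar (m : ℕ) : ℕ :=
  Fintype.card {A : Fin m → Bool //
    (∀ i : Fin m, (i : ℕ) = 0 → A i = true) ∧
    (∀ i : Fin m, (i : ℕ) = 1 → A i = false) ∧
    (∀ i : Fin m, (i : ℕ) = m - 2 → A i = false) ∧
    (∀ i : Fin m, (i : ℕ) = m - 1 → A i = true) ∧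
    conway A A = 2 ^ (m - 1) + 1}

/-- `c n = 2 * cstar (n-1)`: by Csirik's characterization, the number of optimal
strategies for Player I in the Penney-Ante game with strings of length `n`. -/
def c (n : ℕ) : ℕ := 2 * cstar (n - 1)

namespace Csirik

/-- `A` restricted to positions `< n` has period `p` (equivalently a border of length `n - p`). -/
def Br (n : ℕ) (A : ℕ → Bool) (p : ℕ) : Prop := ∀ j, p + j < n → A (p + j) = A j

/-- `A` is a good string of length `n`: begins `HT`, ends `TH`, no border of length `2..n-1`. -/
def Good (n : ℕ) (A : ℕ → Bool) : Prop :=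
  A 0 = true ∧ A 1 = false ∧ A (n-2) = false ∧ A (n-1) = true ∧
  ∀ p, 0 < p → p + 1 < n → ¬ Br n A p

lemma br_congr {n : ℕ} {A B : ℕ → Bool} (h : ∀ k, k < n → A k = B k) (p : ℕ) :
    Br n A p ↔ Br n B p := by
  unfold Br
  constructor <;> intro H j hj <;>
    [rw [← h _ hj, ← h j (by omega)]; rw [h _ hj, h j (by omega)]] <;> exact H j hj

lemma good_congr {n : ℕ} {A B : ℕ → Bool} (hn : 2 ≤ n) (h : ∀ k, k < n → A k = B k) :
    Good n A ↔ Good n B := by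
  unfold Good
  rw [h 0 (by omega), h 1 (by omega), h (n-2) (by omega), h (n-1) (by omega)]
  simp only [and_congr_right_iff]
  intro _ _ _ _
  constructor <;> intro H p h1 h2 <;> have := H p h1 h2 <;>
    [rw [← br_congr h]; rw [br_congr h]] <;> exact this

lemma br_add {n : ℕ} {A : ℕ → Bool} {p q : ℕ} (hp : Br n A p) (hq : Br n A q) :
    Br n A (p + q) := by
  intro j hj
  have h1 : A (p + (q + j)) = A (q + j) := hp (q+j) (by omega)
  have h2 : A (q + j) = A j := hq j (by omega)
  rw [show p + q + j = p + (q + j) by omega, h1, h2]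

lemma br_mul {n : ℕ} {A : ℕ → Bool} {p : ℕ} (hp : Br n A p) (k : ℕ) :
    Br n A (k * p) := by
  induction k with
  | zero => intro j hj; simp
  | succ k ih => rw [show (k+1) * p = k * p + p by ring]; exact br_add ih hp

/-- From a small period, produce a period in any window of width `p`. -/
lemma br_reduce {n : ℕ} {A : ℕ → Bool} {p : ℕ} (hp0 : 0 < p) (hp : Br n A p) (t : ℕ) :
    ∃ q, t ≤ q ∧ q < t + p ∧ Br n A q := by
  rcases Nat.eq_zero_or_pos t with ht | ht
  · exact ⟨0, by omega, by omega, by intro j hj; simp⟩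
  have h1 : (t-1)/p * p ≤ t - 1 := Nat.div_mul_le_self _ _
  have h2 : (t-1) % p + (t-1)/p * p = t - 1 := Nat.mod_add_div' _ _
  have h3 : (t-1) % p < p := Nat.mod_lt _ hp0
  have h4 : ((t-1)/p + 1) * p = (t-1)/p * p + p := by ring
  exact ⟨((t-1)/p + 1) * p, by omega, by omega, br_mul hp _⟩


/-- Insert `x y` after position `m-1`. -/
def insN (m : ℕ) (x y : Bool) (A : ℕ → Bool) : ℕ → Bool := fun k =>
  if k < m then A k else if k = m then x else if k = m+1 then y else A (k-2)

/-- Delete the two positions `m, m+1`. -/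
def delN (m : ℕ) (B : ℕ → Bool) : ℕ → Bool := fun k => if k < m then B k else B (k+2)

/-- From `W` of length `m+1` build `W₁…W_m W₂…W_{m+1}` of length `2m`. -/
def awN (m : ℕ) (W : ℕ → Bool) : ℕ → Bool := fun k => if k < m then W k else W (k-m+1)

/-- Truncate to the first `m` symbols and append `H`. -/
def trN (m : ℕ) (A : ℕ → Bool) : ℕ → Bool := fun k => if k < m then A k else true

/-- `A` (of length `2m`) is bad: its second half is `A₂…A_m H`. -/
def BadN (m : ℕ) (A : ℕ → Bool) : Prop := ∀ k, k + 1 < m → A (m+k) = A (k+1)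

section main
variable {m : ℕ} (hm : 2 ≤ m)
include hm

lemma good_del {B : ℕ → Bool} (hB : Good (2*m+2) B) : Good (2*m) (delN m B) := by
  obtain ⟨h0, h1, h2, h3, h5⟩ := hB
  set A := delN m B with hA
  have hAlt : ∀ k, k < m → A k = B k := fun k hk => by simp [hA, delN, hk]
  have hAge : ∀ k, m ≤ k → A k = B (k+2) := fun k hk => by simp [hA, delN, Nat.not_lt.2 hk]
  have key : ∀ q, m ≤ q → q + 1 < 2*m → ¬ Br (2*m) A q := by
    intro q hq1 hq2 hbr
    refine h5 (q+2) (by omega) (by omega) ?_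
    intro j hj
    have hj1 : j < m := by omega
    have e1 : B (q+2+j) = A (q+j) := by rw [hAge (q+j) (by omega)]; ring_nf
    rw [e1, ← hAlt j hj1]; exact hbr j (by omega)
  refine ⟨?_, ?_, ?_, ?_, ?_⟩
  · rw [hAlt 0 (by omega)]; exact h0
  · rw [hAlt 1 (by omega)]; exact h1
  · rw [hAge (2*m-2) (by omega), show 2*m-2+2 = 2*m+2-2 by omega]; exact h2
  · rw [hAge (2*m-1) (by omega), show 2*m-1+2 = 2*m+2-1 by omega]; exact h3
  · intro p hp0 hp1 hbr
    rcases Nat.lt_or_ge p m with hpm | hpm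
    · obtain ⟨q, hq1, hq2, hq3⟩ := br_reduce hp0 hbr m
      exact key q hq1 (by omega) hq3
    · exact key p hpm hp1 hbr

lemma good_ins {A : ℕ → Bool} {x y : Bool} (hA : Good (2*m) A)
    (h : ¬(x = true ∧ y = true ∧ BadN m A)) : Good (2*m+2) (insN m x y A) := by
  obtain ⟨h0, h1, h2, h3, h5⟩ := hA
  set B := insN m x y A with hB
  have hBlt : ∀ k, k < m → B k = A k := fun k hk => by simp [hB, insN, hk]
  have hBm : B m = x := by simp [hB, insN]
  have hBm1 : B (m+1) = y := by simp [hB, insN]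
  have hBge : ∀ k, m + 2 ≤ k → B k = A (k-2) := fun k hk => by
    simp [hB, insN, show ¬ k < m by omega, show ¬ k = m by omega, show ¬ k = m+1 by omega]
  have key : ∀ q, m + 2 ≤ q → q + 1 < 2*m+2 → ¬ Br (2*m+2) B q := by
    intro q hq1 hq2 hbr
    refine h5 (q-2) (by omega) (by omega) ?_
    intro j hj
    have e1 : A (q-2+j) = B (q+j) := by
      rw [hBge (q+j) (by omega), show q+j-2 = q-2+j by omega]
    rw [e1, ← hBlt j (by omega), hbr j (by omega)]
  refine ⟨?_, ?_, ?_, ?_, ?_⟩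
  · rw [hBlt 0 (by omega)]; exact h0
  · rw [hBlt 1 (by omega)]; exact h1
  · rw [show 2*m+2-2 = 2*m by omega, hBge (2*m) (by omega),
      show 2*m-2 = 2*m-2 by rfl]; exact h2
  · rw [show 2*m+2-1 = 2*m+1 by omega, hBge (2*m+1) (by omega),
      show 2*m+1-2 = 2*m-1 by omega]; exact h3
  · intro p hp0 hp1 hbr
    rcases Nat.lt_or_ge p m with hpm | hpm
    · obtain ⟨q, hq1, hq2, hq3⟩ := br_reduce hp0 hbr (m+2)
      exact key q hq1 (by omega) hq3
    rcases Nat.eq_or_lt_of_le hpm with hpm' | hpm'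
    · -- p = m : use q = 2m
      refine key (2*m) (by omega) (by omega) ?_
      have h2 := br_mul hbr 2
      rwa [show 2*p = 2*m by omega] at h2
    rcases Nat.lt_or_ge (m+1) p with hp2 | hp2
    · exact key p (by omega) hp1 hbr
    -- p = m+1 : extract badness
    have hp : p = m + 1 := by omega
    subst hp
    refine h ⟨?_, ?_, ?_⟩
    · -- x = true
      have := hbr m (by omega)
      rw [hBm, show m+1+m = 2*m+1 by ring, hBge (2*m+1) (by omega),
        show 2*m+1-2 = 2*m-1 by omega, h3] at this
      exact this.symm
    · -- y = true
      have := hbr 0 (by omega)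
      rw [hBm1, hBlt 0 (by omega), h0] at this
      simpa using this
    · intro k hk
      have := hbr (k+1) (by omega)
      rw [show m+1+(k+1) = m+k+2 by ring, hBge (m+k+2) (by omega),
        show m+k+2-2 = m+k by omega, hBlt (k+1) (by omega)] at this
      exact this

lemma bad_ins_not_good {A : ℕ → Bool} (hA : Good (2*m) A) (hbad : BadN m A) :
    ¬ Good (2*m+2) (insN m true true A) := by
  obtain ⟨h0, h1, h2, h3, h5⟩ := hA
  set B := insN m true true A with hB
  have hBlt : ∀ k, k < m → B k = A k := fun k hk => by simp [hB, insN, hk]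
  have hBm : B m = true := by simp [hB, insN]
  have hBm1 : B (m+1) = true := by simp [hB, insN]
  have hBge : ∀ k, m + 2 ≤ k → B k = A (k-2) := fun k hk => by
    simp [hB, insN, show ¬ k < m by omega, show ¬ k = m by omega, show ¬ k = m+1 by omega]
  rintro ⟨_, _, _, _, g5⟩
  refine g5 (m+1) (by omega) (by omega) ?_
  intro j hj
  have hjm : j ≤ m := by omega
  rcases Nat.eq_zero_or_pos j with hj0 | hj0
  · subst hj0
    rw [hBm1, hBlt 0 (by omega), h0]
  rcases Nat.eq_or_lt_of_le hjm with hjm' | hjm'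
  · rw [hjm', show m+1+m = 2*m+1 by ring, hBge (2*m+1) (by omega),
      show 2*m+1-2 = 2*m-1 by omega, h3, hBm]
  · -- 1 ≤ j ≤ m-1
    rw [show m+1+j = m+j+1 by ring, hBge (m+j+1) (by omega),
      show m+j+1-2 = m+(j-1) by omega, hbad (j-1) (by omega),
      show j-1+1 = j by omega, hBlt j (by omega)]

lemma good_aw {W : ℕ → Bool} (hW : Good (m+1) W) : Good (2*m) (awN m W) ∧ BadN m (awN m W) := by
  obtain ⟨h0, h1, h2, h3, h5⟩ := hW
  set A := awN m W with hA
  have hAlt : ∀ k, k < m → A k = W k := fun k hk => by simp [hA, awN, hk]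
  have hAge : ∀ k, m ≤ k → A k = W (k-m+1) := fun k hk => by
    simp [hA, awN, show ¬ k < m by omega]
  have hbad : BadN m A := by
    intro k hk
    rw [hAge (m+k) (by omega), show m+k-m+1 = k+1 by omega, hAlt (k+1) (by omega)]
  refine ⟨⟨?_, ?_, ?_, ?_, ?_⟩, hbad⟩
  · rw [hAlt 0 (by omega)]; exact h0
  · rw [hAlt 1 (by omega)]; exact h1
  · rw [hAge (2*m-2) (by omega), show 2*m-2-m+1 = m+1-2 by omega]; exact h2
  · rw [hAge (2*m-1) (by omega), show 2*m-1-m+1 = m+1-1 by omega]; exact h3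
  · have key : ∀ q, m ≤ q → q + 1 < 2*m → ¬ Br (2*m) A q := by
      intro q hq1 hq2 hbr
      refine h5 (q-m+1) (by omega) (by omega) ?_
      intro j hj
      have hj2 : j + q < 2*m := by omega
      have e1 : W (q-m+1+j) = A (q+j) := by
        rw [hAge (q+j) (by omega), show q+j-m+1 = q-m+1+j by omega]
      rw [e1, ← hAlt j (by omega), hbr j (by omega)]
    intro p hp0 hp1 hbr
    rcases Nat.lt_or_ge p m with hpm | hpm
    · obtain ⟨q, hq1, hq2, hq3⟩ := br_reduce hp0 hbr m
      exact key q hq1 (by omega) hq3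
    · exact key p hpm hp1 hbr

lemma good_tr {A : ℕ → Bool} (hA : Good (2*m) A) (hbad : BadN m A) :
    Good (m+1) (trN m A) := by
  obtain ⟨h0, h1, h2, h3, h5⟩ := hA
  set W := trN m A with hW
  have hWlt : ∀ k, k < m → W k = A k := fun k hk => by simp [hW, trN, hk]
  have hWm : W m = true := by simp [hW, trN]
  refine ⟨?_, ?_, ?_, ?_, ?_⟩
  · rw [hWlt 0 (by omega)]; exact h0
  · rw [hWlt 1 (by omega)]; exact h1
  · rw [show m+1-2 = m-1 by omega, hWlt (m-1) (by omega)]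
    have := hbad (m-2) (by omega)
    rw [show m+(m-2) = 2*m-2 by omega, show m-2+1 = m-1 by omega] at this
    rw [← this]; exact h2
  · rw [show m+1-1 = m by omega]; exact hWm
  · intro s hs0 hs1 hbr
    refine h5 (s+m-1) (by omega) (by omega) ?_
    intro j hj
    have hjs : s + j ≤ m := by omega
    have hws := hbr j (by omega)
    rcases Nat.eq_or_lt_of_le hjs with hsm | hsm
    · -- s + j = m
      rw [show s+m-1+j = 2*m-1 by omega, h3]
      rw [hsm, hWm, hWlt j (by omega)] at hws
      exact hws
    · -- s + j < m
      rw [show s+m-1+j = m+(s+j-1) by omega, hbad (s+j-1) (by omega),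
        show s+j-1+1 = s+j by omega, ← hWlt (s+j) (by omega), hws, hWlt j (by omega)]

end main

section ident
variable {m : ℕ}

lemma del_ins (x y : Bool) (A : ℕ → Bool) (k : ℕ) : delN m (insN m x y A) k = A k := by
  unfold delN insN
  rcases Nat.lt_or_ge k m with h | h
  · simp [h]
  · simp [show ¬ k < m by omega, show ¬ k + 2 < m by omega, show ¬ k + 2 = m by omega,
      show ¬ k + 2 = m + 1 by omega]

lemma ins_del (B : ℕ → Bool) (k : ℕ) : insN m (B m) (B (m+1)) (delN m B) k = B k := by
  unfold delN insN
  rcases Nat.lt_or_ge k m with h | h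
  · simp [h]
  rcases Nat.eq_or_lt_of_le h with h' | h'
  · simp [← h']
  rcases Nat.eq_or_lt_of_le h' with h'' | h''
  · simp [show ¬ k < m by omega, show k = m + 1 by omega]
  · simp [show ¬ k < m by omega, show ¬ k = m by omega, show ¬ k = m + 1 by omega,
      show ¬ k - 2 < m by omega, show k - 2 + 2 = k by omega]

lemma tr_aw (W : ℕ → Bool) (hWm : W m = true) (k : ℕ) (hk : k < m + 1) :
    trN m (awN m W) k = W k := by
  unfold trN awN
  rcases Nat.lt_or_ge k m with h | h
  · simp [h]
  · have : k = m := by omega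
    simp [this, show ¬ m < m by omega, hWm]

lemma aw_tr (hm : 2 ≤ m) (A : ℕ → Bool) (hbad : BadN m A) (h3 : A (2*m-1) = true)
    (k : ℕ) (hk : k < 2*m) : awN m (trN m A) k = A k := by
  unfold awN trN
  rcases Nat.lt_or_ge k m with h | h
  · simp [h]
  have h1 : ¬ k < m := by omega
  rcases Nat.lt_or_ge k (2*m-1) with h2 | h2
  · have h4 : k - m + 1 < m := by omega
    simp only [h1, if_false, h4, if_true]
    have := hbad (k - m) (by omega)
    rw [show m + (k-m) = k by omega, show k-m+1 = k-m+1 by rfl] at this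
    rw [this]
  · have hk' : k = 2*m-1 := by omega
    have h4 : ¬ k - m + 1 < m := by omega
    simp only [h1, if_false, h4, if_false]
    rw [hk', h3]

lemma bad_congr {A B : ℕ → Bool} (h : ∀ k, k < 2*m → A k = B k) :
    BadN m A ↔ BadN m B := by
  unfold BadN
  constructor <;> intro H k hk <;>
    [rw [← h (m+k) (by omega), ← h (k+1) (by omega)];
     rw [h (m+k) (by omega), h (k+1) (by omega)]] <;> exact H k hk

-- congruence of ops: they read their input only below the relevant bound
lemma insN_congr {x y : Bool} {A A' : ℕ → Bool} (h : ∀ k, k < 2*m → A k = A' k)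
    (k : ℕ) (hk : k < 2*m+2) : insN m x y A k = insN m x y A' k := by
  unfold insN
  rcases Nat.lt_or_ge k m with h1 | h1
  · simp only [h1, if_true]; exact h k (by omega)
  rcases Nat.eq_or_lt_of_le h1 with h2 | h2
  · simp [← h2]
  rcases Nat.eq_or_lt_of_le h2 with h3 | h3
  · simp [show k = m+1 by omega]
  · simp only [show ¬ k < m by omega, if_false, show ¬ k = m by omega,
      show ¬ k = m+1 by omega]
    exact h (k-2) (by omega)

lemma delN_congr {B B' : ℕ → Bool} (h : ∀ k, k < 2*m+2 → B k = B' k)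
    (k : ℕ) (hk : k < 2*m) : delN m B k = delN m B' k := by
  unfold delN
  rcases Nat.lt_or_ge k m with h1 | h1
  · simp only [h1, if_true]; exact h k (by omega)
  · simp only [show ¬ k < m by omega, if_false]; exact h (k+2) (by omega)

lemma awN_congr (hm : 2 ≤ m) {W W' : ℕ → Bool} (h : ∀ k, k < m+1 → W k = W' k)
    (k : ℕ) (hk : k < 2*m) : awN m W k = awN m W' k := by
  unfold awN
  rcases Nat.lt_or_ge k m with h1 | h1
  · simp only [h1, if_true]; exact h k (by omega)
  · simp only [show ¬ k < m by omega, if_false]; exact h (k-m+1) (by omega)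

lemma trN_congr {A A' : ℕ → Bool} (h : ∀ k, k < 2*m → A k = A' k)
    (k : ℕ) (hk : k < m+1) : trN m A k = trN m A' k := by
  unfold trN
  rcases Nat.lt_or_ge k m with h1 | h1
  · simp only [h1, if_true]; exact h k (by omega)
  · simp [show ¬ k < m by omega]

end ident

/-- Extend a `Fin n`-indexed string to `ℕ` by `false`. -/
def ext {n : ℕ} (A : Fin n → Bool) : ℕ → Bool := fun k => if h : k < n then A ⟨k, h⟩ else false

lemma ext_apply {n : ℕ} (A : Fin n → Bool) (k : ℕ) (h : k < n) : ext A k = A ⟨k, h⟩ :=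
  dif_pos h

lemma ext_val {n : ℕ} (A : Fin n → Bool) (i : Fin n) : ext A i.val = A i := by
  rw [ext_apply A i.val i.isLt]

lemma ext_of_fun {n : ℕ} (g : ℕ → Bool) (k : ℕ) (h : k < n) :
    ext (fun i : Fin n => g i.val) k = g k := by rw [ext_apply _ k h]


/-- The defining predicate of `cstar`. -/
def Pred (n : ℕ) (A : Fin n → Bool) : Prop :=
  (∀ i : Fin n, (i : ℕ) = 0 → A i = true) ∧
  (∀ i : Fin n, (i : ℕ) = 1 → A i = false) ∧
  (∀ i : Fin n, (i : ℕ) = n - 2 → A i = false) ∧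
  (∀ i : Fin n, (i : ℕ) = n - 1 → A i = true) ∧
  conway A A = 2 ^ (n - 1) + 1

lemma endpoint_iff {n : ℕ} (A : Fin n → Bool) (t : ℕ) (ht : t < n) (b : Bool) :
    (∀ i : Fin n, (i : ℕ) = t → A i = b) ↔ ext A t = b := by
  rw [ext_apply A t ht]
  constructor
  · intro h; exact h ⟨t, ht⟩ rfl
  · intro h i hi
    have : i = ⟨t, ht⟩ := Fin.ext hi
    rw [this, h]

lemma C_iff_br {n : ℕ} (A : Fin n → Bool) (i : Fin n) :
    (∀ j : Fin n, (i : ℕ) + (j : ℕ) < n → A (i + j) = A j) ↔ Br n (ext A) i.val := by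
  have hn : 0 < n := i.pos
  constructor
  · intro h j hj
    have hjn : j < n := by omega
    have hadd : ((i + ⟨j, hjn⟩ : Fin n) : ℕ) = i.val + j := by
      rw [Fin.val_add]; exact Nat.mod_eq_of_lt hj
    rw [ext_apply _ _ hj, ext_apply _ _ hjn, show (⟨i.val + j, hj⟩ : Fin n) = i + ⟨j, hjn⟩ from
      Fin.ext (by rw [hadd])]
    exact h ⟨j, hjn⟩ (by simpa using hj)
  · intro h j hj
    have hadd : ((i + j : Fin n) : ℕ) = i.val + j.val := by
      rw [Fin.val_add]; exact Nat.mod_eq_of_lt hj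
    have := h j.val hj
    rw [ext_apply _ _ hj, ext_apply _ _ j.isLt] at this
    rw [show (i + j : Fin n) = ⟨i.val + j.val, hj⟩ from Fin.ext (by rw [hadd]), this]

lemma pred_iff {n : ℕ} (hn : 3 ≤ n) (A : Fin n → Bool) :
    Pred n A ↔ Good n (ext A) := by
  unfold Pred Good
  rw [endpoint_iff A 0 (by omega), endpoint_iff A 1 (by omega),
    endpoint_iff A (n-2) (by omega), endpoint_iff A (n-1) (by omega)]
  simp only [and_congr_right_iff]
  intro h0 h1 h2 h3
  set f : Fin n → ℕ := fun i =>
    if (∀ j : Fin n, (i : ℕ) + (j : ℕ) < n → A (i + j) = A j) then 2 ^ (n - 1 - (i : ℕ)) else 0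
    with hf
  have hconway : conway A A = ∑ i : Fin n, f i := rfl
  set z : Fin n := ⟨0, by omega⟩ with hz
  set l : Fin n := ⟨n-1, by omega⟩ with hl
  have hzv : (z : ℕ) = 0 := rfl
  have hlv : (l : ℕ) = n - 1 := rfl
  have hzl : z ≠ l := by
    intro h; rw [Fin.ext_iff, hzv, hlv] at h; omega
  have hfz : f z = 2 ^ (n-1) := by
    have hC : (∀ j : Fin n, (z : ℕ) + (j : ℕ) < n → A (z + j) = A j) := by
      rw [C_iff_br]
      intro j hj
      rw [hzv, Nat.zero_add]
    simp only [hf]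
    rw [if_pos hC]
    have : n - 1 - (z : ℕ) = n - 1 := by rw [hzv]; omega
    rw [this]
  have hfl : f l = 1 := by
    have hC : (∀ j : Fin n, (l : ℕ) + (j : ℕ) < n → A (l + j) = A j) := by
      rw [C_iff_br]
      intro j hj
      rw [hlv] at hj
      have hj0 : j = 0 := by omega
      subst hj0
      rw [hlv, Nat.add_zero, h3, h0]
    simp only [hf]
    rw [if_pos hC]
    have : n - 1 - (l : ℕ) = 0 := by rw [hlv]; omega
    rw [this, pow_zero]
  have hsplit : ∑ i : Fin n, f i = f z + (f l + ∑ i ∈ (Finset.univ.erase z).erase l, f i) := by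
    rw [Finset.add_sum_erase _ f (Finset.mem_erase.mpr ⟨hzl.symm, Finset.mem_univ _⟩),
      Finset.add_sum_erase _ f (Finset.mem_univ z)]
  constructor
  · intro hcon p hp0 hp1 hbr
    have hpn : p < n := by omega
    set i : Fin n := ⟨p, hpn⟩ with hi
    have hCi : (∀ j : Fin n, (i : ℕ) + (j : ℕ) < n → A (i + j) = A j) := by
      rw [C_iff_br]; exact hbr
    have hfi : f i = 2 ^ (n - 1 - p) := by simp only [hf]; rw [if_pos hCi]
    have hiz : i ≠ z := by intro h; rw [Fin.ext_iff, hzv] at h; simp only [hi] at h; omega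
    have hil : i ≠ l := by intro h; rw [Fin.ext_iff, hlv] at h; simp only [hi] at h; omega
    have hmem : i ∈ (Finset.univ.erase z).erase l :=
      Finset.mem_erase.mpr ⟨hil, Finset.mem_erase.mpr ⟨hiz, Finset.mem_univ _⟩⟩
    have hle : f i ≤ ∑ i ∈ (Finset.univ.erase z).erase l, f i :=
      Finset.single_le_sum (fun _ _ => Nat.zero_le _) hmem
    rw [hconway, hsplit, hfz, hfl] at hcon
    have hpow : 0 < 2 ^ (n - 1 - p) := Nat.pow_pos (by omega)
    omega
  · intro hnb
    have hS : ∑ i ∈ (Finset.univ.erase z).erase l, f i = 0 := by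
      apply Finset.sum_eq_zero
      intro i hi
      have hil : i ≠ l := (Finset.mem_erase.mp hi).1
      have hiz : i ≠ z := (Finset.mem_erase.mp (Finset.mem_erase.mp hi).2).1
      have hiv0 : (i : ℕ) ≠ 0 := fun h => hiz (Fin.ext (by rw [h, hzv]))
      have hivl : (i : ℕ) ≠ n - 1 := fun h => hil (Fin.ext (by rw [h, hlv]))
      simp only [hf]
      rw [if_neg]
      rw [C_iff_br]
      exact hnb i.val (by omega) (by omega)
    rw [hconway, hsplit, hfz, hfl, hS]



section finops
variable (m : ℕ)

def insF (x y : Bool) (A : Fin (2*m) → Bool) : Fin (2*m+2) → Bool :=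
  fun i => insN m x y (ext A) i.val
def delF (B : Fin (2*m+2) → Bool) : Fin (2*m) → Bool := fun i => delN m (ext B) i.val
def awF (W : Fin (m+1) → Bool) : Fin (2*m) → Bool := fun i => awN m (ext W) i.val
def trF (A : Fin (2*m) → Bool) : Fin (m+1) → Bool := fun i => trN m (ext A) i.val

lemma ext_insF (x y : Bool) (A : Fin (2*m) → Bool) (k : ℕ) (hk : k < 2*m+2) :
    ext (insF m x y A) k = insN m x y (ext A) k := ext_of_fun _ k hk
lemma ext_delF (B : Fin (2*m+2) → Bool) (k : ℕ) (hk : k < 2*m) :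
    ext (delF m B) k = delN m (ext B) k := ext_of_fun _ k hk
lemma ext_awF (W : Fin (m+1) → Bool) (k : ℕ) (hk : k < 2*m) :
    ext (awF m W) k = awN m (ext W) k := ext_of_fun _ k hk
lemma ext_trF (A : Fin (2*m) → Bool) (k : ℕ) (hk : k < m+1) :
    ext (trF m A) k = trN m (ext A) k := ext_of_fun _ k hk

end finops

section equiv
variable {m : ℕ} (hm : 2 ≤ m)
include hm

lemma goodF_ins {A : Fin (2*m) → Bool} {x y : Bool} (hA : Good (2*m) (ext A))
    (h : ¬(x = true ∧ y = true ∧ BadN m (ext A))) : Good (2*m+2) (ext (insF m x y A)) := by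
  rw [good_congr (by omega) (ext_insF m x y A)]
  exact good_ins hm hA h

lemma goodF_del {B : Fin (2*m+2) → Bool} (hB : Good (2*m+2) (ext B)) :
    Good (2*m) (ext (delF m B)) := by
  rw [good_congr (by omega) (ext_delF m B)]
  exact good_del hm hB

lemma goodF_aw {W : Fin (m+1) → Bool} (hW : Good (m+1) (ext W)) :
    Good (2*m) (ext (awF m W)) := by
  rw [good_congr (by omega) (ext_awF m W)]
  exact (good_aw hm hW).1

lemma badF_aw {W : Fin (m+1) → Bool} (hW : Good (m+1) (ext W)) :
    BadN m (ext (awF m W)) := by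
  rw [bad_congr (ext_awF m W)]
  exact (good_aw hm hW).2

lemma goodF_tr {A : Fin (2*m) → Bool} (hA : Good (2*m) (ext A)) (hbad : BadN m (ext A)) :
    Good (m+1) (ext (trF m A)) := by
  rw [good_congr (by omega) (ext_trF m A)]
  exact good_tr hm hA hbad

lemma delF_insF (x y : Bool) (A : Fin (2*m) → Bool) : delF m (insF m x y A) = A := by
  funext i
  show delN m (ext (insF m x y A)) i.val = A i
  rw [delN_congr (ext_insF m x y A) i.val i.isLt, del_ins, ext_val]

lemma insF_delF (B : Fin (2*m+2) → Bool) :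
    insF m (B ⟨m, by omega⟩) (B ⟨m+1, by omega⟩) (delF m B) = B := by
  funext i
  show insN m _ _ (ext (delF m B)) i.val = B i
  rw [insN_congr (ext_delF m B) i.val i.isLt,
    show B ⟨m, by omega⟩ = ext B m from (ext_apply B m (by omega)).symm,
    show B ⟨m+1, by omega⟩ = ext B (m+1) from (ext_apply B (m+1) (by omega)).symm,
    ins_del, ext_val]

lemma awF_trF {A : Fin (2*m) → Bool} (hA : Good (2*m) (ext A)) (hbad : BadN m (ext A)) :
    awF m (trF m A) = A := by
  funext i
  show awN m (ext (trF m A)) i.val = A i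
  rw [awN_congr hm (ext_trF m A) i.val i.isLt, aw_tr hm (ext A) hbad hA.2.2.2.1 i.val i.isLt,
    ext_val]

lemma trF_awF {W : Fin (m+1) → Bool} (hW : Good (m+1) (ext W)) :
    trF m (awF m W) = W := by
  funext i
  show trN m (ext (awF m W)) i.val = W i
  have hWm : ext W m = true := by
    have := hW.2.2.2.1
    rwa [show m+1-1 = m by omega] at this
  rw [trN_congr (ext_awF m W) i.val i.isLt, tr_aw (ext W) hWm i.val i.isLt, ext_val]

lemma notbad_of_good {B : Fin (2*m+2) → Bool} (hB : Good (2*m+2) (ext B)) :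
    ¬(B ⟨m, by omega⟩ = true ∧ B ⟨m+1, by omega⟩ = true ∧ BadN m (ext (delF m B))) := by
  rintro ⟨hx, hy, hbad⟩
  have hgood : Good (2*m) (ext (delF m B)) := goodF_del hm hB
  refine bad_ins_not_good hm hgood hbad ?_
  have : ext (insF m true true (delF m B)) = ext B := by
    funext k
    rcases Nat.lt_or_ge k (2*m+2) with hk | hk
    · rw [ext_insF m true true _ k hk]
      have h1 : insF m true true (delF m B) = insF m (B ⟨m, by omega⟩) (B ⟨m+1, by omega⟩) (delF m B) := by
        rw [hx, hy]
      calc insN m true true (ext (delF m B)) k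
          = ext (insF m true true (delF m B)) k := (ext_insF m true true _ k hk).symm
        _ = ext B k := by rw [h1, insF_delF hm]
    · unfold ext
      rw [dif_neg (by omega), dif_neg (by omega)]
  have h2 : Good (2*m+2) (ext (insF m true true (delF m B))) := by rw [this]; exact hB
  rwa [good_congr (by omega) (ext_insF m true true (delF m B))] at h2

open Classical in
noncomputable def phi :
    ({A : Fin (2*m) → Bool // Good (2*m) (ext A)} × Bool × Bool) ≃
      ({B : Fin (2*m+2) → Bool // Good (2*m+2) (ext B)} ⊕
       {W : Fin (m+1) → Bool // Good (m+1) (ext W)}) where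
  toFun p :=
    if h : p.2.1 = true ∧ p.2.2 = true ∧ BadN m (ext p.1.1) then
      Sum.inr ⟨trF m p.1.1, goodF_tr hm p.1.2 h.2.2⟩
    else
      Sum.inl ⟨insF m p.2.1 p.2.2 p.1.1, goodF_ins hm p.1.2 h⟩
  invFun s :=
    match s with
    | Sum.inl ⟨B, hB⟩ => (⟨delF m B, goodF_del hm hB⟩, B ⟨m, by omega⟩, B ⟨m+1, by omega⟩)
    | Sum.inr ⟨W, hW⟩ => (⟨awF m W, goodF_aw hm hW⟩, true, true)
  left_inv p := by
    obtain ⟨⟨A, hA⟩, x, y⟩ := p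
    by_cases h : x = true ∧ y = true ∧ BadN m (ext A)
    · simp only [dif_pos h]
      obtain ⟨hx, hy, hbad⟩ := h
      refine Prod.ext ?_ (Prod.ext ?_ ?_) <;> simp only
      · exact Subtype.ext (awF_trF hm hA hbad)
      · exact hx.symm
      · exact hy.symm
    · simp only [dif_neg h]
      refine Prod.ext ?_ (Prod.ext ?_ ?_) <;> simp only
      · exact Subtype.ext (delF_insF hm x y A)
      · show insF m x y A ⟨m, by omega⟩ = x
        show insN m x y (ext A) m = x
        simp [insN]
      · show insF m x y A ⟨m+1, by omega⟩ = y
        show insN m x y (ext A) (m+1) = y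
        simp [insN]
  right_inv s := by
    match s with
    | Sum.inl ⟨B, hB⟩ =>
      simp only
      rw [dif_neg (notbad_of_good hm hB)]
      exact congrArg Sum.inl (Subtype.ext (insF_delF hm B))
    | Sum.inr ⟨W, hW⟩ =>
      simp only
      rw [dif_pos ⟨by simp, by simp, badF_aw hm hW⟩]
      exact congrArg Sum.inr (Subtype.ext (trF_awF hm hW))

end equiv
end Csirik


/-- For every integer `m ≥ 2`, `4 c*_{2m} = c*_{2m+2} + c*_{m+1}`. -/
theorem four_cstar_even (m : ℕ) (hm : 2 ≤ m) :
    4 * cstar (2 * m) = cstar (2 * m + 2) + cstar (m + 1) := by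
  classical
  have h1 : cstar (2*m) = Fintype.card {A : Fin (2*m) → Bool // Csirik.Good (2*m) (Csirik.ext A)} := by
    unfold cstar
    exact Fintype.card_congr (Equiv.subtypeEquivRight (fun A => Csirik.pred_iff (by omega) A))
  have h2 : cstar (2*m+2) = Fintype.card {B : Fin (2*m+2) → Bool // Csirik.Good (2*m+2) (Csirik.ext B)} := by
    unfold cstar
    exact Fintype.card_congr (Equiv.subtypeEquivRight (fun A => Csirik.pred_iff (by omega) A))
  have h3 : cstar (m+1) = Fintype.card {W : Fin (m+1) → Bool // Csirik.Good (m+1) (Csirik.ext W)} := by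
    unfold cstar
    exact Fintype.card_congr (Equiv.subtypeEquivRight (fun A => Csirik.pred_iff (by omega) A))
  have key := Fintype.card_congr (Csirik.phi hm)
  rw [Fintype.card_prod, Fintype.card_prod, Fintype.card_bool, Fintype.card_sum] at key
  rw [h1, h2, h3]
  omega
end

section
/- Let m ≥ 2 and let A be a head/tail string of length 2m+2 whose autocorrelation C(A,A) is congruent to 1 modulo 2^m (i.e., its last m binary bits are 00…01). Then C(A,A) equals either 2^{2m+1} + 1 or 2^{2m+1} + 2^m + 1. -/
/-- Extension of a string to all of ℕ. -/
def Aext {n : ℕ} (A : Fin n → Bool) (i : ℕ) : Bool :=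
  if h : i < n then A ⟨i, h⟩ else false

/-- `A` is periodic with shift `s` (on the overlap). -/
def Per {n : ℕ} (A : Fin n → Bool) (s : ℕ) : Prop :=
  ∀ j : ℕ, s + j < n → Aext A (s + j) = Aext A j

lemma per_zero {n : ℕ} (A : Fin n → Bool) : Per A 0 := fun j _ => by simp

lemma per_mul {n : ℕ} {A : Fin n → Bool} {s : ℕ} (h : Per A s) (k : ℕ) : Per A (k * s) := by
  induction k with
  | zero => intro j hj; simp
  | succ k ih =>
    intro j hj
    have e : (k + 1) * s + j = s + (k * s + j) := by ring
    have h1 : Aext A (s + (k * s + j)) = Aext A (k * s + j) := h _ (by omega)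
    rw [e, h1, ih j (by omega)]

lemma per_iff {n : ℕ} (A : Fin n → Bool) (i : Fin n) :
    (∀ j : Fin n, (i : ℕ) + (j : ℕ) < n → A (i + j) = A j) ↔ Per A (i : ℕ) := by
  constructor
  · intro h j hj
    have hjn : j < n := by omega
    have hadd : (i + (⟨j, hjn⟩ : Fin n)) = ⟨(i : ℕ) + j, hj⟩ := by
      apply Fin.ext
      simp [Fin.add_def, Nat.mod_eq_of_lt hj]
    have h2 := h ⟨j, hjn⟩ hj
    rw [hadd] at h2
    simpa [Aext, hj, hjn] using h2
  · intro h j hj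
    have hadd : (i + j) = (⟨(i : ℕ) + (j : ℕ), hj⟩ : Fin n) := by
      apply Fin.ext
      simp [Fin.add_def, Nat.mod_eq_of_lt hj]
    have h2 := h (j : ℕ) hj
    rw [hadd]
    simpa [Aext, hj, j.is_lt] using h2

open Classical in
/-- The contribution of shift `i` to the autocorrelation. -/
noncomputable def Fc (m : ℕ) (A : Fin (2 * m + 2) → Bool) (i : ℕ) : ℕ :=
  if Per A i then 2 ^ (2 * m + 1 - i) else 0

lemma sum_two_pow (k : ℕ) : ∑ i ∈ Finset.range k, 2 ^ i = 2 ^ k - 1 := by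
  induction k with
  | zero => simp
  | succ k ih =>
    rw [Finset.sum_range_succ, ih, pow_succ]
    have : 0 < 2 ^ k := pow_pos (by norm_num) k
    omega

/-- If `m ≥ 2` and `A` is a string of length `2m+2` whose autocorrelation is congruent to
`1` modulo `2^m`, then its autocorrelation equals `2^{2m+1} + 1` or `2^{2m+1} + 2^m + 1`. -/
theorem autocorr_even_length' (m : ℕ) (hm : 2 ≤ m) (A : Fin (2 * m + 2) → Bool)
    (h : conway A A ≡ 1 [MOD 2 ^ m]) :
    conway A A = 2 ^ (2 * m + 1) + 1 ∨ conway A A = 2 ^ (2 * m + 1) + 2 ^ m + 1 := by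
  have hconv : conway A A = ∑ i ∈ Finset.range (2 * m + 2), Fc m A i := by
    rw [← Fin.sum_univ_eq_sum_range (fun i => Fc m A i) (2 * m + 2)]
    unfold conway
    refine Finset.sum_congr rfl fun i _ => ?_
    have he : 2 * m + 2 - 1 - (i : ℕ) = 2 * m + 1 - (i : ℕ) := by omega
    rw [he, Fc]
    have := per_iff A i
    split_ifs with h1 h2 <;> first | rfl | (exfalso; tauto)
  set L : ℕ := ∑ i ∈ Finset.Ico (m + 2) (2 * m + 2), Fc m A i with hL
  have hsplit : conway A A = (∑ i ∈ Finset.range (m + 2), Fc m A i) + L := by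
    rw [hconv, Finset.range_eq_Ico,
      ← Finset.sum_Ico_consecutive _ (by omega : 0 ≤ m + 2) (by omega : m + 2 ≤ 2 * m + 2), ← Finset.range_eq_Ico]
  have hdvd : 2 ^ m ∣ ∑ i ∈ Finset.range (m + 2), Fc m A i := by
    apply Finset.dvd_sum
    intro i hi
    rw [Finset.mem_range] at hi
    rw [Fc]
    split_ifs
    · exact pow_dvd_pow 2 (by omega)
    · exact dvd_zero _
  have h2mpos : 0 < 2 ^ m := pow_pos (by norm_num) m
  have hLlt : L < 2 ^ m := by
    have hle : L ≤ ∑ i ∈ Finset.Ico (m + 2) (2 * m + 2), 2 ^ (2 * m + 1 - i) := by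
      apply Finset.sum_le_sum
      intro i _
      rw [Fc]
      split_ifs <;> simp
    have heq : ∑ i ∈ Finset.Ico (m + 2) (2 * m + 2), 2 ^ (2 * m + 1 - i) = 2 ^ m - 1 := by
      rw [Finset.sum_Ico_eq_sum_range]
      have hc : ∀ i ∈ Finset.range (2 * m + 2 - (m + 2)), 2 ^ (2 * m + 1 - (m + 2 + i)) = 2 ^ (m - 1 - i) :=
        fun i _ => by congr 1; omega
      rw [Finset.sum_congr rfl hc, show 2 * m + 2 - (m + 2) = m by omega,
        Finset.sum_range_reflect (fun i => 2 ^ i) m]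
      exact sum_two_pow m
    omega
  have hL1 : L = 1 := by
    have h1 : conway A A ≡ L [MOD 2 ^ m] := by
      rw [hsplit]
      exact ((Nat.modEq_zero_iff_dvd.2 hdvd).add_right L).trans (by simpa using Nat.ModEq.refl L)
    have h2 : L ≡ 1 [MOD 2 ^ m] := h1.symm.trans h
    have hlt1 : (1 : ℕ) < 2 ^ m := by
      calc (1 : ℕ) < 2 ^ 1 := by norm_num
      _ ≤ 2 ^ m := Nat.pow_le_pow_right (by norm_num) (by omega)
    unfold Nat.ModEq at h2
    rw [Nat.mod_eq_of_lt hLlt, Nat.mod_eq_of_lt hlt1] at h2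
    exact h2
  have notPer : ∀ t, m + 2 ≤ t → t ≤ 2 * m → ¬ Per A t := by
    intro t h1 h2 hPer
    have hmem : t ∈ Finset.Ico (m + 2) (2 * m + 2) := Finset.mem_Ico.2 ⟨h1, by omega⟩
    have hle : Fc m A t ≤ L :=
      Finset.single_le_sum (f := Fc m A) (fun i _ => Nat.zero_le _) hmem
    rw [Fc, if_pos hPer, hL1] at hle
    have h2le : 2 ≤ 2 ^ (2 * m + 1 - t) := by
      calc (2 : ℕ) = 2 ^ 1 := rfl
      _ ≤ 2 ^ (2 * m + 1 - t) := Nat.pow_le_pow_right (by norm_num) (by omega)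
    omega
  have notLow : ∀ s, 1 ≤ s → s ≤ m → ¬ Per A s := by
    intro s h1 h2 hPer
    by_cases hs : s = m
    · exact notPer (2 * s) (by omega) (by omega) (per_mul hPer 2)
    · have h0 : 0 < s := h1
      have hdm := Nat.div_add_mod (m + 1 + s) s
      have hmod : (m + 1 + s) % s < s := Nat.mod_lt _ h0
      set k := (m + 1 + s) / s with hk
      have hcomm : k * s = s * k := Nat.mul_comm k s
      exact notPer (k * s) (by omega) (by omega) (per_mul hPer k)
  have hmid : ∑ i ∈ Finset.range (m + 2), Fc m A i = 2 ^ (2 * m + 1) + Fc m A (m + 1) := by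
    rw [show m + 2 = (m + 1) + 1 from rfl, Finset.sum_range_succ]
    congr 1
    rw [Finset.sum_range_succ']
    have hz : ∑ i ∈ Finset.range m, Fc m A (i + 1) = 0 :=
      Finset.sum_eq_zero fun i hi => by
        rw [Finset.mem_range] at hi
        rw [Fc, if_neg (notLow (i + 1) (by omega) (by omega))]
    rw [hz, Fc, if_pos (per_zero A)]
    simp
  have hfinal : conway A A = 2 ^ (2 * m + 1) + Fc m A (m + 1) + 1 := by
    rw [hsplit, hmid, hL1]
  by_cases hp : Per A (m + 1)
  · right
    rw [hfinal, Fc, if_pos hp, show 2 * m + 1 - (m + 1) = m by omega]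
  · left
    rw [hfinal, Fc, if_neg hp]
end
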